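/- Let p be a prime and n a positive integer with n ≤ p. Then the falling factorial polynomial (x)_{(n+1)p} = ∏_{j=0}^{(n+1)p−1}(x − j) is a null polynomial on the ring of dual numbers ℤ_{p^n}[α]. -/

import Mathlib

open Polynomial TrivSqZeroExt

lemma aeval_dualNumber {A : Type*} [CommRing A] (f : ℤ[X]) (a b : A) :
    Polynomial.aeval (inl a + inr b : DualNumber A) f
      = inl (Polynomial.aeval a f) + inr (Polynomial.aeval a (derivative f) * b) := by
  induction f using Polynomial.induction_on' with
  | add f g hf hg =>
      simp only [map_add, derivative_add, hf, hg, add_mul, inl_add, inr_add]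
      abel
  | monomial m r =>
      induction m with
      | zero => simp
      | succ k ih =>
          have h1 : (monomial (k+1) r : ℤ[X]) = monomial k r * X := by
            rw [← monomial_one_one_eq_X, monomial_mul_monomial, mul_one]
          have hd : derivative (monomial k r * X) =
              derivative (monomial k r) * X + monomial k r := by
            rw [derivative_mul, derivative_X, mul_one]
          rw [h1, hd, map_mul, ih, aeval_X, map_add, map_mul, aeval_X]
          set G := Polynomial.aeval a (monomial k r : ℤ[X])
          set G' := Polynomial.aeval a (derivative (monomial k r : ℤ[X]))
          simp only [add_mul, mul_add, inl_mul_inl, inl_mul_inr, inr_mul_inl, inr_mul_inr,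
            smul_eq_mul, op_smul_eq_mul, add_zero, inr_add, inl_add]
          ring_nf
          simp only [map_mul, aeval_X]
          ring_nf
          change _ = _ + _ + inr (a * b * G')
          rw [add_right_comm, mul_right_comm a b]


lemma key_dvd (p n : ℕ) (hp : p.Prime) (A : ℤ) (k : ℕ) :
    (p : ℤ) ^ n ∣ ∏ j ∈ (Finset.range ((n + 1) * p)).erase k, (A - (j : ℤ)) := by
  have hp0 : (0:ℤ) < p := by exact_mod_cast hp.pos
  set r : ℕ := (A % p).toNat with hr_def
  have hr : (r : ℤ) = A % p := Int.toNat_of_nonneg (Int.emod_nonneg A (ne_of_gt hp0))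
  have hrlt : r < p := by
    have h2 := Int.emod_lt_of_pos A hp0
    omega
  set S : Finset ℕ := (Finset.range (n+1)).image (fun i => r + i * p) with hS_def
  have hS_sub : S ⊆ Finset.range ((n+1)*p) := by
    intro j hj
    obtain ⟨i, hi, rfl⟩ := Finset.mem_image.mp hj
    simp only [Finset.mem_range] at hi ⊢
    calc r + i * p < p + i * p := by omega
      _ ≤ p + n * p := by
          have : i * p ≤ n * p := Nat.mul_le_mul_right p (by omega)
          omega
      _ = (n+1) * p := by ring
  have hS_card : S.card = n + 1 := by
    rw [hS_def, Finset.card_image_of_injective, Finset.card_range]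
    intro i j hij
    simp only at hij
    have : i * p = j * p := by omega
    exact Nat.eq_of_mul_eq_mul_right hp.pos this
  have hdvd : ∀ j ∈ S, (p:ℤ) ∣ (A - j) := by
    intro j hj
    obtain ⟨i, _, rfl⟩ := Finset.mem_image.mp hj
    push_cast
    have hAe : A - ((r:ℤ) + i * p) = p * (A / p) - i * p := by
      rw [hr]
      have := Int.mul_ediv_add_emod A p
      linarith
    rw [hAe]
    exact dvd_sub (Dvd.intro _ rfl) ⟨i, mul_comm _ _⟩
  have hT_sub : S.erase k ⊆ (Finset.range ((n+1)*p)).erase k :=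
    Finset.erase_subset_erase _ hS_sub
  have hT_card : n ≤ (S.erase k).card := by
    have := Finset.pred_card_le_card_erase (s := S) (a := k)
    omega
  calc (p:ℤ)^n ∣ (p:ℤ)^(S.erase k).card := pow_dvd_pow _ hT_card
    _ = ∏ _j ∈ S.erase k, (p:ℤ) := by rw [Finset.prod_const]
    _ ∣ ∏ j ∈ S.erase k, (A - (j:ℤ)) :=
        Finset.prod_dvd_prod_of_dvd _ _ (fun j hj => hdvd j (Finset.mem_of_mem_erase hj))
    _ ∣ _ := Finset.prod_dvd_prod_of_subset _ _ _ hT_sub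

lemma derivative_finset_prod (s : Finset ℕ) (f : ℕ → ℤ[X]) :
    derivative (∏ j ∈ s, f j) = ∑ k ∈ s, (∏ j ∈ s.erase k, f j) * derivative (f k) := by
  classical
  rw [Finset.prod_eq_multiset_prod, derivative_prod]
  simp only [Finset.sum_eq_multiset_sum, Finset.prod_eq_multiset_prod, Finset.erase_val]


/-- **Proposition.**
Let `p` be a prime and `n ≤ p` a positive integer.  Then the falling factorial
`(x)_{(n+1)p} = ∏_{j=0}^{(n+1)p-1} (x - j)` is a null polynomial on the ring of
dual numbers `ℤ_{p^n}[α]`. -/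
theorem fallingFactorial_null_on_dualNumber_pn (p n : ℕ) (hp : p.Prime)
    (hn : 0 < n) (hnp : n ≤ p) :
    ∀ z : DualNumber (ZMod (p ^ n)),
      aeval z (∏ j ∈ Finset.range ((n + 1) * p), ((X : ℤ[X]) - C (j : ℤ))) = 0 := by
  intro z
  haveI : NeZero (p ^ n) := ⟨pow_ne_zero n hp.ne_zero⟩
  set F : ℤ[X] := ∏ j ∈ Finset.range ((n + 1) * p), ((X : ℤ[X]) - C (j : ℤ)) with hF
  set a : ZMod (p ^ n) := z.fst
  set A : ℤ := (a.val : ℤ) with hA_def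
  have hA : ((A : ℤ) : ZMod (p ^ n)) = a := by
    rw [hA_def, Int.cast_natCast]
    exact ZMod.natCast_rightInverse a
  have heval : ∀ g : ℤ[X], Polynomial.aeval a g = ((Polynomial.eval A g : ℤ) : ZMod (p ^ n)) := by
    intro g
    rw [← hA]
    have : ((A : ℤ) : ZMod (p ^ n)) = algebraMap ℤ (ZMod (p ^ n)) A := by
      simp
    rw [this, aeval_algebraMap_apply_eq_algebraMap_eval]
    simp
  have hpn : ((p : ℤ) ^ n) = ((p ^ n : ℕ) : ℤ) := by push_cast; ring
  -- value divisibility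
  have h1 : Polynomial.aeval a F = 0 := by
    rw [heval, ZMod.intCast_zmod_eq_zero_iff_dvd, ← hpn]
    have hev : Polynomial.eval A F = ∏ j ∈ Finset.range ((n + 1) * p), (A - (j : ℤ)) := by
      simp [hF, Polynomial.eval_prod]
    rw [hev]
    calc (p:ℤ)^n ∣ ∏ j ∈ (Finset.range ((n + 1) * p)).erase ((n+1)*p), (A - (j:ℤ)) :=
          key_dvd p n hp A _
      _ ∣ _ := Finset.prod_dvd_prod_of_subset _ _ _ (Finset.erase_subset _ _)
  -- derivative divisibility
  have h2 : Polynomial.aeval a (derivative F) = 0 := by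
    rw [heval, ZMod.intCast_zmod_eq_zero_iff_dvd, ← hpn]
    have hd : Polynomial.eval A (derivative F)
        = ∑ k ∈ Finset.range ((n + 1) * p),
            ∏ j ∈ (Finset.range ((n + 1) * p)).erase k, (A - (j : ℤ)) := by
      rw [hF, derivative_finset_prod]
      simp [Polynomial.eval_finset_sum, Polynomial.eval_prod]
    rw [hd]
    exact Finset.dvd_sum fun k _ => key_dvd p n hp A k
  calc Polynomial.aeval z F
      = Polynomial.aeval (TrivSqZeroExt.inl a + TrivSqZeroExt.inr z.snd : DualNumber _) F := by
        rw [TrivSqZeroExt.inl_fst_add_inr_snd_eq]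
    _ = TrivSqZeroExt.inl (Polynomial.aeval a F)
        + TrivSqZeroExt.inr (Polynomial.aeval a (derivative F) * z.snd) := aeval_dualNumber F a z.snd
    _ = 0 := by rw [h1, h2, zero_mul]; simp
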